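/- Let (X,S,τ) be a singular pair and let U = U_nc^{fh}(X,S,τ) be the universal group with the canonical maps π_f, π_h : X×X → U. Then: (i) the pair (π_f, π_h) is a non-commutative 2-cocycle pair; (ii) for every group H and every non-commutative 2-cocycle pair f, h : X×X → H there exists a unique group homomorphism ρ : U → H with f = ρ∘π_f and h = ρ∘π_h. -/

import Mathlib

namespace Paper

/-- The flip map on `X × X`. -/
def flipMap (X : Type*) : X × X → X × X := fun p => (p.2, p.1)

/-- `F × id` acting on triples. -/
def onFst {X : Type*} (F : X × X → X × X) : X × X × X → X × X × X :=
  fun p => ((F (p.1, p.2.1)).1, (F (p.1, p.2.1)).2, p.2.2)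

/-- `id × F` acting on triples. -/
def onSnd {X : Type*} (F : X × X → X × X) : X × X × X → X × X × X :=
  fun p => (p.1, F p.2)

/-- `F` is left invertible: for all `x z` there is a unique `y` with `F¹(x,y) = z`. -/
def LeftInvertible {X : Type*} (F : X × X → X × X) : Prop :=
  ∀ x z : X, ∃! y : X, (F (x, y)).1 = z

/-- `F` is right invertible: for all `y t` there is a unique `x` with `F²(x,y) = t`. -/
def RightInvertible {X : Type*} (F : X × X → X × X) : Prop :=
  ∀ y t : X, ∃! x : X, (F (x, y)).2 = t

/-- Set-theoretic solution of the Yang–Baxter equation. -/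
def IsYB {X : Type*} (S : X × X → X × X) : Prop :=
  Function.Bijective S ∧
    onSnd S ∘ onFst S ∘ onSnd S = onFst S ∘ onSnd S ∘ onFst S

/-- Biquandle: a left and right invertible YB solution together with a bijection
`s : X → X` parametrizing the fixed points of `S`. -/
def IsBiquandle {X : Type*} (S : X × X → X × X) : Prop :=
  IsYB S ∧ LeftInvertible S ∧ RightInvertible S ∧
    ∃ s : X → X, Function.Bijective s ∧ ∀ x y : X, S (x, y) = (x, y) ↔ y = s x

/-- `(X, S, τ)` is a singular pair. -/
def IsSingularPair {X : Type*} (S τ : X × X → X × X) : Prop :=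
  IsBiquandle S ∧ Function.Bijective τ ∧ LeftInvertible τ ∧ RightInvertible τ ∧
    τ ∘ S = S ∘ τ ∧
    onFst S ∘ onSnd S ∘ onFst τ = onSnd τ ∘ onFst S ∘ onSnd S ∧
    onSnd S ∘ onFst S ∘ onSnd τ = onFst τ ∘ onSnd S ∘ onFst S

/-- A non-commutative 2-cocycle pair for a singular pair `(X,S,τ)` with biquandle
bijection `s`, with values in a group `G`. -/
def IsNC2CocyclePair {X : Type*} (S τ : X × X → X × X) (s : X → X)
    {G : Type*} [Group G] (f h : X × X → G) : Prop :=
  -- (f1)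
  (∀ x y z : X, f (x, y) * f ((S (x, y)).2, z) =
      f (x, (S (y, z)).1) * f ((S (x, (S (y, z)).1)).2, (S (y, z)).2)) ∧
  -- (f2)
  (∀ x y z : X, f ((S (x, y)).1, (S ((S (x, y)).2, z)).1) = f (y, z)) ∧
  -- (f3)
  (∀ x : X, f (x, s x) = 1) ∧
  -- (f4)
  (∀ x y z : X, f (x, y) * f ((S (x, y)).2, z) =
      f (x, (τ (y, z)).1) * f ((S (x, (τ (y, z)).1)).2, (τ (y, z)).2)) ∧
  -- (h1)
  (∀ x y z : X, h ((S (x, y)).1, (S ((S (x, y)).2, z)).1) = h (y, z)) ∧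
  -- (c1)
  (∀ x y z : X, f (x, (S (y, z)).1) * h ((S (x, (S (y, z)).1)).2, (S (y, z)).2) =
      h (x, y) * f ((τ (x, y)).2, z)) ∧
  -- (c2)
  (∀ x y z : X, f (y, z) * h ((S (x, (S (y, z)).1)).2, (S (y, z)).2) =
      h (x, y) * f ((τ (x, y)).1, (S ((τ (x, y)).2, z)).1)) ∧
  -- (c3)
  (∀ x y : X, h (x, y) = f (x, y) * h (S (x, y))) ∧
  -- (c4)
  (∀ x y : X, h (S (x, y)) = h (x, y) * f (τ (x, y)))

/-- Generator of type `f` in the free group on `(X×X) ⊕ (X×X)`. -/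
def genF {X : Type*} (p : X × X) : FreeGroup ((X × X) ⊕ (X × X)) :=
  FreeGroup.of (Sum.inl p)

/-- Generator of type `h` in the free group on `(X×X) ⊕ (X×X)`. -/
def genH {X : Type*} (p : X × X) : FreeGroup ((X × X) ⊕ (X × X)) :=
  FreeGroup.of (Sum.inr p)

/-- The relations of the universal group `U_nc^{fh}(X,S,τ)`. -/
def uncRels {X : Type*} (S τ : X × X → X × X) : Set (FreeGroup ((X × X) ⊕ (X × X))) :=
  ⋃ (x : X) (y : X) (z : X),
    { -- (f1)
      genF (x, y) * genF ((S (x, y)).2, z) *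
        (genF (x, (S (y, z)).1) * genF ((S (x, (S (y, z)).1)).2, (S (y, z)).2))⁻¹,
      -- (f4)
      genF (x, y) * genF ((S (x, y)).2, z) *
        (genF (x, (τ (y, z)).1) * genF ((S (x, (τ (y, z)).1)).2, (τ (y, z)).2))⁻¹,
      -- (h1)
      genH ((S (x, y)).1, (S ((S (x, y)).2, z)).1) * (genH (y, z))⁻¹,
      -- (c1)
      genF (x, (S (y, z)).1) * genH ((S (x, (S (y, z)).1)).2, (S (y, z)).2) *
        (genH (x, y) * genF ((τ (x, y)).2, z))⁻¹,
      -- (c2)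
      genF (y, z) * genH ((S (x, (S (y, z)).1)).2, (S (y, z)).2) *
        (genH (x, y) * genF ((τ (x, y)).1, (S ((τ (x, y)).2, z)).1))⁻¹,
      -- (c3)
      genH (x, y) * (genF (x, y) * genH (S (x, y)))⁻¹,
      -- (c4)
      genH (S (x, y)) * (genH (x, y) * genF (τ (x, y)))⁻¹ }

/-- The universal group `U_nc^{fh}(X,S,τ)`. -/
def Unc {X : Type*} (S τ : X × X → X × X) : Type _ :=
  PresentedGroup (uncRels S τ)

instance {X : Type*} (S τ : X × X → X × X) : Group (Unc S τ) :=
  inferInstanceAs (Group (PresentedGroup (uncRels S τ)))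

/-- The universal map `π_f`. -/
def piF {X : Type*} (S τ : X × X → X × X) : X × X → Unc S τ :=
  fun p => PresentedGroup.of (rels := uncRels S τ) (Sum.inl p)

/-- The universal map `π_h`. -/
def piH {X : Type*} (S τ : X × X → X × X) : X × X → Unc S τ :=
  fun p => PresentedGroup.of (rels := uncRels S τ) (Sum.inr p)


section Aux
variable {X : Type*} (S τ : X × X → X × X)

/-- The quotient map as a hom. -/
def mkU : FreeGroup ((X × X) ⊕ (X × X)) →* Unc S τ :=
  QuotientGroup.mk' (Subgroup.normalClosure (uncRels S τ))

lemma mkU_rel {r : FreeGroup ((X × X) ⊕ (X × X))} (hr : r ∈ uncRels S τ) :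
    mkU S τ r = 1 := by
  apply (QuotientGroup.eq_one_iff _).2
  exact Subgroup.subset_normalClosure hr

lemma mkU_genF (p : X × X) : mkU S τ (genF p) = piF S τ p := rfl
lemma mkU_genH (p : X × X) : mkU S τ (genH p) = piH S τ p := rfl

lemma mem_uncRels (x y z : X) {r : FreeGroup ((X × X) ⊕ (X × X))}
    (hr : r ∈ ({ genF (x, y) * genF ((S (x, y)).2, z) *
        (genF (x, (S (y, z)).1) * genF ((S (x, (S (y, z)).1)).2, (S (y, z)).2))⁻¹,
      genF (x, y) * genF ((S (x, y)).2, z) *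
        (genF (x, (τ (y, z)).1) * genF ((S (x, (τ (y, z)).1)).2, (τ (y, z)).2))⁻¹,
      genH ((S (x, y)).1, (S ((S (x, y)).2, z)).1) * (genH (y, z))⁻¹,
      genF (x, (S (y, z)).1) * genH ((S (x, (S (y, z)).1)).2, (S (y, z)).2) *
        (genH (x, y) * genF ((τ (x, y)).2, z))⁻¹,
      genF (y, z) * genH ((S (x, (S (y, z)).1)).2, (S (y, z)).2) *
        (genH (x, y) * genF ((τ (x, y)).1, (S ((τ (x, y)).2, z)).1))⁻¹,
      genH (x, y) * (genF (x, y) * genH (S (x, y)))⁻¹,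
      genH (S (x, y)) * (genH (x, y) * genF (τ (x, y)))⁻¹ } :
        Set (FreeGroup ((X × X) ⊕ (X × X))))) :
    r ∈ uncRels S τ := by
  exact Set.mem_iUnion.2 ⟨x, Set.mem_iUnion.2 ⟨y, Set.mem_iUnion.2 ⟨z, hr⟩⟩⟩

lemma relF1 (x y z : X) :
    piF S τ (x, y) * piF S τ ((S (x, y)).2, z) =
      piF S τ (x, (S (y, z)).1) * piF S τ ((S (x, (S (y, z)).1)).2, (S (y, z)).2) := by
  have hm : (genF (x, y) * genF ((S (x, y)).2, z) *
      (genF (x, (S (y, z)).1) * genF ((S (x, (S (y, z)).1)).2, (S (y, z)).2))⁻¹ : FreeGroup ((X × X) ⊕ (X × X))) ∈ uncRels S τ :=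
    mem_uncRels S τ x y z (by simp)
  have := mkU_rel S τ hm
  simp only [map_mul, map_inv, mkU_genF, mkU_genH] at this
  rw [mul_inv_eq_one] at this
  exact this

lemma relF4 (x y z : X) :
    piF S τ (x, y) * piF S τ ((S (x, y)).2, z) =
      piF S τ (x, (τ (y, z)).1) * piF S τ ((S (x, (τ (y, z)).1)).2, (τ (y, z)).2) := by
  have hm : (genF (x, y) * genF ((S (x, y)).2, z) *
      (genF (x, (τ (y, z)).1) * genF ((S (x, (τ (y, z)).1)).2, (τ (y, z)).2))⁻¹ : FreeGroup ((X × X) ⊕ (X × X))) ∈ uncRels S τ :=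
    mem_uncRels S τ x y z (by simp)
  have := mkU_rel S τ hm
  simp only [map_mul, map_inv, mkU_genF, mkU_genH] at this
  rw [mul_inv_eq_one] at this
  exact this

lemma relH1 (x y z : X) :
    piH S τ ((S (x, y)).1, (S ((S (x, y)).2, z)).1) = piH S τ (y, z) := by
  have hm : (genH ((S (x, y)).1, (S ((S (x, y)).2, z)).1) * (genH (y, z))⁻¹ : FreeGroup ((X × X) ⊕ (X × X))) ∈ uncRels S τ :=
    mem_uncRels S τ x y z (by simp)
  have := mkU_rel S τ hm
  simpa [mul_inv_eq_one, map_mul, mkU_genH] using this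

lemma relC1 (x y z : X) :
    piF S τ (x, (S (y, z)).1) * piH S τ ((S (x, (S (y, z)).1)).2, (S (y, z)).2) =
      piH S τ (x, y) * piF S τ ((τ (x, y)).2, z) := by
  have hm : (genF (x, (S (y, z)).1) * genH ((S (x, (S (y, z)).1)).2, (S (y, z)).2) *
      (genH (x, y) * genF ((τ (x, y)).2, z))⁻¹ : FreeGroup ((X × X) ⊕ (X × X))) ∈ uncRels S τ :=
    mem_uncRels S τ x y z (by simp)
  have := mkU_rel S τ hm
  simp only [map_mul, map_inv, mkU_genF, mkU_genH] at this
  rw [mul_inv_eq_one] at this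
  exact this

lemma relC2 (x y z : X) :
    piF S τ (y, z) * piH S τ ((S (x, (S (y, z)).1)).2, (S (y, z)).2) =
      piH S τ (x, y) * piF S τ ((τ (x, y)).1, (S ((τ (x, y)).2, z)).1) := by
  have hm : (genF (y, z) * genH ((S (x, (S (y, z)).1)).2, (S (y, z)).2) *
      (genH (x, y) * genF ((τ (x, y)).1, (S ((τ (x, y)).2, z)).1))⁻¹ : FreeGroup ((X × X) ⊕ (X × X))) ∈ uncRels S τ :=
    mem_uncRels S τ x y z (by simp)
  have := mkU_rel S τ hm
  simp only [map_mul, map_inv, mkU_genF, mkU_genH] at this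
  rw [mul_inv_eq_one] at this
  exact this

lemma relC3 (x y : X) :
    piH S τ (x, y) = piF S τ (x, y) * piH S τ (S (x, y)) := by
  have hm : (genH (x, y) * (genF (x, y) * genH (S (x, y)))⁻¹ : FreeGroup ((X × X) ⊕ (X × X))) ∈ uncRels S τ :=
    mem_uncRels S τ x y y (by simp)
  have := mkU_rel S τ hm
  simp only [map_mul, map_inv, mkU_genF, mkU_genH] at this
  rw [mul_inv_eq_one] at this
  exact this

lemma relC4 (x y : X) :
    piH S τ (S (x, y)) = piH S τ (x, y) * piF S τ (τ (x, y)) := by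
  have hm : (genH (S (x, y)) * (genH (x, y) * genF (τ (x, y)))⁻¹ : FreeGroup ((X × X) ⊕ (X × X))) ∈ uncRels S τ :=
    mem_uncRels S τ x y y (by simp)
  have := mkU_rel S τ hm
  simp only [map_mul, map_inv, mkU_genF, mkU_genH] at this
  rw [mul_inv_eq_one] at this
  exact this

end Aux

/-- `(π_f, π_h)` is a non-commutative 2-cocycle pair, and it is universal:
every non-commutative 2-cocycle pair factors uniquely through `U_nc^{fh}(X,S,τ)`. -/
theorem Unc_universal {X : Type*} (S τ : X × X → X × X) (hsp : IsSingularPair S τ)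
    (s : X → X) (hsbij : Function.Bijective s)
    (hsfix : ∀ x y : X, S (x, y) = (x, y) ↔ y = s x) :
    IsNC2CocyclePair S τ s (piF S τ) (piH S τ) ∧
      ∀ (H : Type*) [Group H] (f h : X × X → H), IsNC2CocyclePair S τ s f h →
        ∃! ρ : Unc S τ →* H,
          (∀ p : X × X, ρ (piF S τ p) = f p) ∧ (∀ p : X × X, ρ (piH S τ p) = h p) := by
  constructor
  · refine ⟨relF1 S τ, ?_, ?_, relF4 S τ, relH1 S τ, relC1 S τ, relC2 S τ, relC3 S τ,
      relC4 S τ⟩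
    · -- (f2)
      intro x y z
      have hyb := congrFun hsp.1.1.2 (x, y, z)
      simp only [Function.comp_apply, onFst, onSnd, Prod.mk.injEq] at hyb
      have hSab : S ((S (x, y)).1, (S ((S (x, y)).2, z)).1) =
          ((S (x, (S (y, z)).1)).1,
            (S ((S (x, (S (y, z)).1)).2, (S (y, z)).2)).1) := by
        refine Prod.ext hyb.1.symm ?_
        exact (congrArg Prod.fst hyb.2).symm
      have hc3ab := relC3 S τ (S (x, y)).1 (S ((S (x, y)).2, z)).1
      have hc3yz := relC3 S τ y z
      have hh1 := relH1 S τ x y z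
      have hh2 := relH1 S τ x (S (y, z)).1 (S (y, z)).2
      have hfab : piF S τ ((S (x, y)).1, (S ((S (x, y)).2, z)).1) =
          piH S τ ((S (x, y)).1, (S ((S (x, y)).2, z)).1) *
            (piH S τ (S ((S (x, y)).1, (S ((S (x, y)).2, z)).1)))⁻¹ :=
        eq_mul_inv_of_mul_eq hc3ab.symm
      have hfyz : piF S τ (y, z) = piH S τ (y, z) * (piH S τ (S (y, z)))⁻¹ :=
        eq_mul_inv_of_mul_eq hc3yz.symm
      rw [hfab, hfyz, hh1, hSab, hh2]
    · -- (f3)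
      intro x
      have hc3 := relC3 S τ x (s x)
      rw [(hsfix x (s x)).2 rfl] at hc3
      exact mul_eq_right.1 hc3.symm
  · intro H _ f h hfh
    set F0 : (X × X) ⊕ (X × X) → H := Sum.elim f h with hF0
    have hrel : ∀ r ∈ uncRels S τ, FreeGroup.lift F0 r = 1 := by
      intro r hr
      simp only [uncRels, Set.mem_iUnion] at hr
      obtain ⟨x, y, z, hr⟩ := hr
      simp only [Set.mem_insert_iff, Set.mem_singleton_iff] at hr
      rcases hr with rfl | rfl | rfl | rfl | rfl | rfl | rfl <;>
        simp only [genF, genH, map_mul, map_inv, FreeGroup.lift_apply_of, hF0, Sum.elim_inl,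
          Sum.elim_inr] <;> rw [mul_inv_eq_one]
      · exact hfh.1 x y z
      · exact hfh.2.2.2.1 x y z
      · exact hfh.2.2.2.2.1 x y z
      · exact hfh.2.2.2.2.2.1 x y z
      · exact hfh.2.2.2.2.2.2.1 x y z
      · exact hfh.2.2.2.2.2.2.2.1 x y
      · exact hfh.2.2.2.2.2.2.2.2 x y
    refine ⟨PresentedGroup.toGroup hrel, ⟨fun p => ?_, fun p => ?_⟩, ?_⟩
    · exact PresentedGroup.toGroup.of hrel
    · exact PresentedGroup.toGroup.of hrel
    · intro ρ' ⟨hf', hh'⟩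
      refine PresentedGroup.ext (rels := uncRels S τ) fun g => ?_
      rcases g with p | p
      · exact (hf' p).trans (PresentedGroup.toGroup.of hrel (x := Sum.inl p)).symm
      · exact (hh' p).trans (PresentedGroup.toGroup.of hrel (x := Sum.inr p)).symm

end Paper
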